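/- Fix n ≥ 1. Let A be the quotient of the free abelian group on the set of isomorphism classes of graphs with at most n edges by the relations: [∅] = 0 for the empty graph ∅, and [G] = Σ_{i ∈ I} [G_i] whenever {G_i}_{i ∈ I} is a finite family of subgraphs of a graph G (with at most n edges) whose union is G and such that for all i ≠ j the subgraphs G_i and G_j have no edge of G in common. Then the homomorphism A → ℤ induced by [G] ↦ |E(G)| is a group isomorphism; in particular A is infinite cyclic, generated by the class of the one-edge graph K₂, and [G] = |E(G)|·[K₂] in A for every graph G with at most n edges. -/

import Mathlib

open SimpleGraph

structure FGraph : Type 1 where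
  V : Type
  [finV : Finite V]
  graph : SimpleGraph V

attribute [instance] FGraph.finV

namespace FGraph

def IsIsoTo (G H : FGraph) : Prop := Nonempty (G.graph ≃g H.graph)

instance setoid : Setoid FGraph where
  r := IsIsoTo
  iseqv := ⟨fun G => ⟨RelIso.refl G.graph.Adj⟩, fun ⟨e⟩ => ⟨e.symm⟩, fun ⟨e⟩ ⟨f⟩ => ⟨e.trans f⟩⟩

end FGraph

def GraphClass : Type 1 := Quotient FGraph.setoid

namespace FGraph

def cls (G : FGraph) : GraphClass := Quotient.mk _ G

noncomputable def edgeCount (G : FGraph) : ℕ := G.graph.edgeSet.ncard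

/-- A subgraph of `G`, regarded as a finite graph in its own right. -/
def ofSubgraph (G : FGraph) (H : G.graph.Subgraph) : FGraph :=
  { V := ↥H.verts, graph := H.coe }

lemma edgeCount_ofSubgraph_le (G : FGraph) (H : G.graph.Subgraph) :
    (G.ofSubgraph H).edgeCount ≤ G.edgeCount := by
  classical
  have h1 : (G.ofSubgraph H).edgeCount
      = (Sym2.map ((↑) : ↥H.verts → G.V) ⁻¹' H.edgeSet).ncard := by
    simp [edgeCount, ofSubgraph, SimpleGraph.Subgraph.edgeSet_coe]
  rw [h1]
  calc (Sym2.map ((↑) : ↥H.verts → G.V) ⁻¹' H.edgeSet).ncard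
      ≤ H.edgeSet.ncard :=
        Set.ncard_le_ncard_of_injOn _ (fun a ha => ha)
          ((Sym2.map.injective Subtype.val_injective).injOn) (Set.toFinite _)
    _ ≤ G.graph.edgeSet.ncard := Set.ncard_le_ncard H.edgeSet_subset (Set.toFinite _)

end FGraph

/-- The empty graph (no vertices, no edges). -/
def emptyFGraph : FGraph := { V := Empty, graph := ⊥ }

lemma emptyFGraph_edgeCount : emptyFGraph.edgeCount = 0 := by
  simp [FGraph.edgeCount, emptyFGraph]

/-- The graph `K₂`: exactly two vertices joined by one edge. -/
def fGraphK2 : FGraph := { V := Fin 2, graph := ⊤ }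

lemma fGraphK2_edgeCount : fGraphK2.edgeCount = 1 := by
  have h : (⊤ : SimpleGraph (Fin 2)).edgeSet = {s(0, 1)} := by
    ext e
    induction e using Sym2.ind with
    | _ x y =>
      simp only [SimpleGraph.mem_edgeSet, SimpleGraph.top_adj, Set.mem_singleton_iff,
        Sym2.eq, Sym2.rel_iff', Prod.mk.injEq, Prod.swap_prod_mk]
      fin_cases x <;> fin_cases y <;> simp
  simp [FGraph.edgeCount, fGraphK2, h]

/-- Isomorphism classes of graphs with at most `n` edges. -/
def GClassLe (n : ℕ) : Type 1 :=
  {c : GraphClass // ∃ G : FGraph, G.cls = c ∧ G.edgeCount ≤ n}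

/-- The relations defining `K₀(Γ_{≤ n})`: the class of the empty graph is zero, and
`[G] = Σ_i [G_i]` whenever `(G_i)` is a finite family of subgraphs of `G` whose union
is `G` and whose members pairwise share no edge of `G`. -/
def GammaLeRel (n : ℕ) : AddSubgroup (FreeAbelianGroup (GClassLe n)) :=
  AddSubgroup.closure
    ({FreeAbelianGroup.of (⟨emptyFGraph.cls, emptyFGraph, rfl, by
        simp [emptyFGraph_edgeCount]⟩ : GClassLe n)} ∪
     {x | ∃ (G : FGraph) (hG : G.edgeCount ≤ n) (l : List G.graph.Subgraph),
        l.foldr (· ⊔ ·) ⊥ = ⊤ ∧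
        l.Pairwise (fun H K => ∀ e, ¬(e ∈ H.edgeSet ∧ e ∈ K.edgeSet)) ∧
        x = FreeAbelianGroup.of (⟨G.cls, G, rfl, hG⟩ : GClassLe n)
          - (l.map fun H => FreeAbelianGroup.of
              (⟨(G.ofSubgraph H).cls, G.ofSubgraph H, rfl,
                le_trans (G.edgeCount_ofSubgraph_le H) hG⟩ : GClassLe n)).sum})

/-- `K₀(Γ_{≤ n})`. -/
abbrev K0GammaLe (n : ℕ) : Type 1 := FreeAbelianGroup (GClassLe n) ⧸ GammaLeRel n

namespace K0Aux
open FGraph SimpleGraph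

noncomputable def cnt : GraphClass → ℤ :=
  Quotient.lift (fun G => (G.edgeCount : ℤ)) (by
    rintro G H ⟨e⟩
    simp only [Nat.cast_inj]
    unfold FGraph.edgeCount
    rw [← Nat.card_coe_set_eq, ← Nat.card_coe_set_eq]
    exact Nat.card_congr e.mapEdgeSet)

lemma cnt_cls (G : FGraph) : cnt G.cls = (G.edgeCount : ℤ) := rfl

lemma edgeCount_ofSubgraph (G : FGraph) (H : G.graph.Subgraph) :
    (G.ofSubgraph H).edgeCount = H.edgeSet.ncard := by
  unfold FGraph.edgeCount
  rw [← SimpleGraph.Subgraph.image_coe_edgeSet_coe]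
  exact (Set.ncard_image_of_injective _ (Sym2.map.injective Subtype.val_injective)).symm

variable {V : Type} [Finite V] {G : SimpleGraph V}

lemma foldr_adj (l : List G.Subgraph) (a b : V) :
    (l.foldr (· ⊔ ·) ⊥).Adj a b ↔ ∃ H ∈ l, H.Adj a b := by
  induction l with
  | nil => simp
  | cons H t ih => simp [Subgraph.sup_adj, ih]

lemma mem_foldr_edgeSet (l : List G.Subgraph) (e : Sym2 V) :
    e ∈ (l.foldr (· ⊔ ·) ⊥).edgeSet ↔ ∃ H ∈ l, e ∈ H.edgeSet := by
  induction e using Sym2.ind with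
  | _ a b => simpa [Subgraph.mem_edgeSet] using foldr_adj l a b

lemma ncard_foldr (l : List G.Subgraph)
    (hpw : l.Pairwise (fun H K => ∀ e, ¬(e ∈ H.edgeSet ∧ e ∈ K.edgeSet))) :
    ((l.foldr (· ⊔ ·) ⊥).edgeSet).ncard = (l.map fun H => H.edgeSet.ncard).sum := by
  induction l with
  | nil =>
    simp [Subgraph.edgeSet_bot]
  | cons H t ih =>
    rw [List.foldr_cons, Subgraph.edgeSet_sup, List.map_cons, List.sum_cons,
      Set.ncard_union_eq ?_ (Set.toFinite _) (Set.toFinite _), ih hpw.tail]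
    rw [Set.disjoint_left]
    intro e heH het
    obtain ⟨K, hK, heK⟩ := (mem_foldr_edgeSet t e).1 het
    exact (List.pairwise_cons.1 hpw).1 K hK e ⟨heH, heK⟩

end K0Aux
namespace K0Aux
open FGraph SimpleGraph

set_option linter.unusedSectionVars false

lemma count_eq_sum (G : FGraph) (l : List G.graph.Subgraph)
    (htop : l.foldr (· ⊔ ·) ⊥ = ⊤)
    (hpw : l.Pairwise (fun H K => ∀ e, ¬(e ∈ H.edgeSet ∧ e ∈ K.edgeSet))) :
    (G.edgeCount : ℤ) = (l.map fun H => ((G.ofSubgraph H).edgeCount : ℤ)).sum := by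
  have h1 : G.edgeCount = (l.map fun H => H.edgeSet.ncard).sum := by
    have := ncard_foldr l hpw
    rw [htop, Subgraph.edgeSet_top] at this
    exact this
  rw [h1, Nat.cast_list_sum, List.map_map]
  congr 1
  apply List.map_congr_left
  intro H _
  simp [edgeCount_ofSubgraph]

/-- The spanning edgeless subgraph. -/
def vertsSub {V : Type} (G : SimpleGraph V) : G.Subgraph where
  verts := Set.univ
  Adj _ _ := False
  adj_sub h := h.elim
  edge_vert h := h.elim
  symm := ⟨fun _ _ h => h.elim⟩

lemma vertsSub_edgeSet {V : Type} (G : SimpleGraph V) : (vertsSub G).edgeSet = ∅ := by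
  ext e
  induction e using Sym2.ind with
  | _ a b => simp [vertsSub, Subgraph.mem_edgeSet]

/-- The single-edge subgraph attached to an edge. -/
def edgeSub {V : Type} (G : SimpleGraph V) (e : Sym2 V) : G.Subgraph where
  verts := {v | v ∈ e}
  Adj a b := G.Adj a b ∧ s(a, b) = e
  adj_sub h := h.1
  edge_vert {a b} h := by rw [Set.mem_setOf_eq, ← h.2]; exact Sym2.mem_mk_left a b
  symm := ⟨fun a b h => ⟨h.1.symm, by rw [Sym2.eq_swap]; exact h.2⟩⟩

lemma edgeSub_edgeSet {V : Type} (G : SimpleGraph V) (e : Sym2 V) (he : e ∈ G.edgeSet) :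
    (edgeSub G e).edgeSet = {e} := by
  ext f
  induction f using Sym2.ind with
  | _ a b =>
    simp only [Subgraph.mem_edgeSet, Set.mem_singleton_iff, edgeSub]
    constructor
    · exact fun h => h.2
    · rintro rfl
      exact ⟨he, rfl⟩

end K0Aux
namespace K0Aux
open FGraph SimpleGraph

lemma edgeSub_cls (G : FGraph) (e : Sym2 G.V) (he : e ∈ G.graph.edgeSet) :
    (G.ofSubgraph (edgeSub G.graph e)).cls = fGraphK2.cls := by
  classical
  induction e using Sym2.ind with
  | _ a b =>
    have hab : G.graph.Adj a b := he
    have hne : a ≠ b := hab.ne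
    have ha : a ∈ (edgeSub G.graph s(a, b)).verts := Sym2.mem_mk_left a b
    have hb : b ∈ (edgeSub G.graph s(a, b)).verts := Sym2.mem_mk_right a b
    have iso : (edgeSub G.graph s(a, b)).coe ≃g (⊤ : SimpleGraph (Fin 2)) := by
      refine ⟨⟨fun x => if (x : G.V) = a then 0 else 1,
        fun i => if i = 0 then ⟨a, ha⟩ else ⟨b, hb⟩, ?_, ?_⟩, ?_⟩
      · rintro ⟨x, hx⟩
        rcases Sym2.mem_iff.1 hx with rfl | rfl
        · simp
        · simp [hne.symm]
      · intro i
        fin_cases i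
        · simp
        · simp [hne.symm]
      · rintro ⟨x, hx⟩ ⟨y, hy⟩
        simp only [Equiv.coe_fn_mk, top_adj, Subgraph.coe_adj]
        rcases Sym2.mem_iff.1 hx with rfl | rfl <;>
          rcases Sym2.mem_iff.1 hy with rfl | rfl <;>
          simp [hne, hne.symm, edgeSub, hab, hab.symm, Sym2.eq_swap, SimpleGraph.irrefl]
    exact Quotient.sound ⟨iso⟩

lemma top_cls (E : FGraph) : (E.ofSubgraph ⊤).cls = E.cls :=
  Quotient.sound ⟨Subgraph.topIso⟩

end K0Aux
namespace K0Aux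
open FGraph SimpleGraph

lemma edgeSub_edgeSet_subset {V : Type} (G : SimpleGraph V) (e : Sym2 V) :
    (edgeSub G e).edgeSet ⊆ {e} := by
  intro f hf
  induction f using Sym2.ind with
  | _ a b => exact hf.2

lemma foldr_verts {V : Type} {G : SimpleGraph V} (l : List G.Subgraph) (v : V) :
    v ∈ (l.foldr (· ⊔ ·) ⊥).verts ↔ ∃ H ∈ l, v ∈ H.verts := by
  induction l with
  | nil => simp [Subgraph.verts_bot]
  | cons H t ih => simp [Subgraph.verts_sup, ih]

lemma edgeless_zero (n : ℕ) (E : FGraph) (hE : E.graph.edgeSet = ∅) (hE' : E.edgeCount ≤ n) :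
    (QuotientAddGroup.mk (FreeAbelianGroup.of (⟨E.cls, E, rfl, hE'⟩ : GClassLe n))
      : K0GammaLe n) = 0 := by
  rw [QuotientAddGroup.eq_zero_iff]
  have hpw : (([⊤, ⊤] : List E.graph.Subgraph)).Pairwise
      (fun H K => ∀ e, ¬(e ∈ H.edgeSet ∧ e ∈ K.edgeSet)) := by
    refine List.pairwise_cons.2 ⟨?_, ?_⟩
    · intro K _ e he
      have := he.1
      rw [Subgraph.edgeSet_top, hE] at this
      exact this
    · simp
  have hmem : (FreeAbelianGroup.of (⟨E.cls, E, rfl, hE'⟩ : GClassLe n)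
      - ((([⊤, ⊤] : List E.graph.Subgraph)).map fun H => FreeAbelianGroup.of
          (⟨(E.ofSubgraph H).cls, E.ofSubgraph H, rfl,
            le_trans (E.edgeCount_ofSubgraph_le H) hE'⟩ : GClassLe n)).sum)
      ∈ GammaLeRel n :=
    AddSubgroup.subset_closure (Or.inr ⟨E, hE', [⊤, ⊤], by simp, hpw, rfl⟩)
  have hx : (⟨(E.ofSubgraph ⊤).cls, E.ofSubgraph ⊤, rfl,
      le_trans (E.edgeCount_ofSubgraph_le ⊤) hE'⟩ : GClassLe n)
      = (⟨E.cls, E, rfl, hE'⟩ : GClassLe n) := Subtype.ext (top_cls E)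
  rw [List.map_cons, List.map_cons, List.map_nil, List.sum_cons, List.sum_cons,
    List.sum_nil, hx] at hmem
  have h2 := (GammaLeRel n).neg_mem hmem
  have h3 : -(FreeAbelianGroup.of (⟨E.cls, E, rfl, hE'⟩ : GClassLe n)
      - (FreeAbelianGroup.of (⟨E.cls, E, rfl, hE'⟩ : GClassLe n)
        + (FreeAbelianGroup.of (⟨E.cls, E, rfl, hE'⟩ : GClassLe n) + 0)))
      = FreeAbelianGroup.of (⟨E.cls, E, rfl, hE'⟩ : GClassLe n) := by abel
  exact (congrArg (· ∈ GammaLeRel n) h3).mp h2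

end K0Aux
namespace K0Aux
open FGraph SimpleGraph

lemma genB (n : ℕ) (hn : 1 ≤ n) (G : FGraph) (hG : G.edgeCount ≤ n) :
    (QuotientAddGroup.mk (FreeAbelianGroup.of (⟨G.cls, G, rfl, hG⟩ : GClassLe n))
      : K0GammaLe n)
    = G.edgeCount • (QuotientAddGroup.mk (FreeAbelianGroup.of
        (⟨fGraphK2.cls, fGraphK2, rfl, by rw [fGraphK2_edgeCount]; exact hn⟩ :
          GClassLe n)) : K0GammaLe n) := by
  classical
  set L := G.graph.edgeSet.toFinite.toFinset.toList with hL
  have hLmem : ∀ e ∈ L, e ∈ G.graph.edgeSet := fun e h =>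
    (Set.Finite.mem_toFinset _).1 (Finset.mem_toList.1 h)
  have hLlen : L.length = G.edgeCount := by
    rw [hL, Finset.length_toList, FGraph.edgeCount,
      Set.ncard_eq_toFinset_card _ G.graph.edgeSet.toFinite]
  set l : List G.graph.Subgraph := vertsSub G.graph :: L.map (edgeSub G.graph) with hl
  have htop : l.foldr (· ⊔ ·) ⊥ = ⊤ := by
    apply Subgraph.ext
    · ext v
      simp only [Subgraph.verts_top, Set.mem_univ, iff_true, foldr_verts]
      exact ⟨vertsSub G.graph, by simp [hl], Set.mem_univ v⟩
    · funext w x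
      apply propext
      rw [foldr_adj, Subgraph.top_adj]
      constructor
      · rintro ⟨H, hH, hadj⟩
        exact H.adj_sub hadj
      · intro hadj
        refine ⟨edgeSub G.graph s(w, x), ?_, hadj, rfl⟩
        rw [hl]
        refine List.mem_cons_of_mem _ (List.mem_map.2 ⟨s(w, x), ?_, rfl⟩)
        rw [hL, Finset.mem_toList, Set.Finite.mem_toFinset]
        exact hadj
  have hpw : l.Pairwise (fun H K => ∀ e, ¬(e ∈ H.edgeSet ∧ e ∈ K.edgeSet)) := by
    rw [hl]
    refine List.pairwise_cons.2 ⟨?_, ?_⟩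
    · intro K _ e he
      have := he.1
      rw [vertsSub_edgeSet] at this
      exact this
    · rw [List.pairwise_map]
      refine List.Pairwise.imp ?_ (Finset.nodup_toList _)
      intro e e' hne f hf
      have h1 := edgeSub_edgeSet_subset G.graph e hf.1
      have h2 := edgeSub_edgeSet_subset G.graph e' hf.2
      rw [Set.mem_singleton_iff] at h1 h2
      exact hne (h1 ▸ h2)
  have hmem : (FreeAbelianGroup.of (⟨G.cls, G, rfl, hG⟩ : GClassLe n)
      - (l.map fun H => FreeAbelianGroup.of
          (⟨(G.ofSubgraph H).cls, G.ofSubgraph H, rfl,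
            le_trans (G.edgeCount_ofSubgraph_le H) hG⟩ : GClassLe n)).sum)
      ∈ GammaLeRel n :=
    AddSubgroup.subset_closure (Or.inr ⟨G, hG, l, htop, hpw, rfl⟩)
  have key : (QuotientAddGroup.mk (FreeAbelianGroup.of (⟨G.cls, G, rfl, hG⟩ : GClassLe n))
      : K0GammaLe n)
      = QuotientAddGroup.mk ((l.map fun H => FreeAbelianGroup.of
          (⟨(G.ofSubgraph H).cls, G.ofSubgraph H, rfl,
            le_trans (G.edgeCount_ofSubgraph_le H) hG⟩ : GClassLe n)).sum) := by
    erw [QuotientAddGroup.eq]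
    have := (GammaLeRel n).neg_mem hmem
    convert this using 1
    exact ((neg_sub _ _).trans (sub_eq_neg_add _ _)).symm
  rw [key]
  -- push the quotient map inside the sum
  have hsum : (QuotientAddGroup.mk ((l.map fun H => FreeAbelianGroup.of
          (⟨(G.ofSubgraph H).cls, G.ofSubgraph H, rfl,
            le_trans (G.edgeCount_ofSubgraph_le H) hG⟩ : GClassLe n)).sum) : K0GammaLe n)
      = (((l.map fun H => FreeAbelianGroup.of
          (⟨(G.ofSubgraph H).cls, G.ofSubgraph H, rfl,
            le_trans (G.edgeCount_ofSubgraph_le H) hG⟩ : GClassLe n))).map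
          (QuotientAddGroup.mk' (GammaLeRel n))).sum :=
    map_list_sum (QuotientAddGroup.mk' (GammaLeRel n)) _
  erw [hsum, List.map_map, hl, List.map_cons, List.sum_cons]
  have hvz : ((QuotientAddGroup.mk' (GammaLeRel n)) ∘ fun H : G.graph.Subgraph =>
        FreeAbelianGroup.of (⟨(G.ofSubgraph H).cls, G.ofSubgraph H, rfl,
          le_trans (G.edgeCount_ofSubgraph_le H) hG⟩ : GClassLe n)) (vertsSub G.graph)
      = 0 := by
    apply edgeless_zero n _ ?_ (le_trans (G.edgeCount_ofSubgraph_le _) hG)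
    erw [show (G.ofSubgraph (vertsSub G.graph)).graph = (vertsSub G.graph).coe from rfl,
      SimpleGraph.Subgraph.edgeSet_coe, vertsSub_edgeSet]
    simp
    rfl
  erw [hvz, zero_add, List.map_map]
  have hce : ∀ e ∈ L, (((QuotientAddGroup.mk' (GammaLeRel n)) ∘ fun H : G.graph.Subgraph =>
        FreeAbelianGroup.of (⟨(G.ofSubgraph H).cls, G.ofSubgraph H, rfl,
          le_trans (G.edgeCount_ofSubgraph_le H) hG⟩ : GClassLe n)) ∘ edgeSub G.graph) e
      = QuotientAddGroup.mk (FreeAbelianGroup.of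
          (⟨fGraphK2.cls, fGraphK2, rfl, by rw [fGraphK2_edgeCount]; exact hn⟩ :
            GClassLe n)) := by
    intro e he
    simp only [Function.comp_apply, QuotientAddGroup.mk'_apply]
    congr 1
    congr 1
    exact Subtype.ext (edgeSub_cls G e (hLmem e he))
  erw [List.map_congr_left hce, List.map_const', List.sum_replicate, hLlen]
  rfl
end K0Aux
namespace K0Aux
open FGraph SimpleGraph

noncomputable def cntHom (n : ℕ) : FreeAbelianGroup (GClassLe n) →+ ℤ :=
  FreeAbelianGroup.lift (fun c : GClassLe n => cnt c.1)

lemma cntHom_of (n : ℕ) (c : GClassLe n) : cntHom n (FreeAbelianGroup.of c) = cnt c.1 :=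
  FreeAbelianGroup.lift_apply_of _ _

lemma rel_le_ker (n : ℕ) : GammaLeRel n ≤ (cntHom n).ker := by
  rw [GammaLeRel]
  rw [AddSubgroup.closure_le]
  rintro x (hx | ⟨G, hG, l, htop, hpw, rfl⟩)
  · replace hx := Set.mem_singleton_iff.1 hx
    subst hx
    erw [SetLike.mem_coe, AddMonoidHom.mem_ker, cntHom_of]
    show (emptyFGraph.edgeCount : ℤ) = 0
    rw [emptyFGraph_edgeCount, Nat.cast_zero]
  · erw [SetLike.mem_coe, AddMonoidHom.mem_ker, map_sub, cntHom_of, map_list_sum,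
      List.map_map, sub_eq_zero]
    show (G.edgeCount : ℤ) = _
    rw [count_eq_sum G l htop hpw]
    congr 1
end K0Aux

namespace K0Aux
open FGraph SimpleGraph

noncomputable def phi0 (n : ℕ) : K0GammaLe n →+ ℤ :=
  QuotientAddGroup.lift (GammaLeRel n) (cntHom n) (rel_le_ker n)

lemma phi0_mk (n : ℕ) (x : FreeAbelianGroup (GClassLe n)) :
    phi0 n (QuotientAddGroup.mk x) = cntHom n x := rfl

end K0Aux


/-- the homomorphism `K₀(Γ_{≤n}) → ℤ` induced by `[G] ↦ |E(G)|` is a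
group isomorphism; in particular `K₀(Γ_{≤n})` is infinite cyclic generated by `[K₂]`,
and `[G] = |E(G)| • [K₂]` for every graph `G` with at most `n` edges. -/
theorem K0GammaLe_iso_int (n : ℕ) (hn : 1 ≤ n) :
    ∃ φ : K0GammaLe n ≃+ ℤ,
      (∀ (G : FGraph) (hG : G.edgeCount ≤ n),
        φ (QuotientAddGroup.mk (FreeAbelianGroup.of (⟨G.cls, G, rfl, hG⟩ : GClassLe n)))
          = (G.edgeCount : ℤ)) ∧
      (∀ (G : FGraph) (hG : G.edgeCount ≤ n),
        (QuotientAddGroup.mk (FreeAbelianGroup.of (⟨G.cls, G, rfl, hG⟩ : GClassLe n))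
            : K0GammaLe n)
          = G.edgeCount •
            (QuotientAddGroup.mk (FreeAbelianGroup.of
              (⟨fGraphK2.cls, fGraphK2, rfl, by rw [fGraphK2_edgeCount]; exact hn⟩ :
                GClassLe n)) : K0GammaLe n)) := by
  classical
  set k2 : GClassLe n :=
    ⟨fGraphK2.cls, fGraphK2, rfl, by rw [fGraphK2_edgeCount]; exact hn⟩ with hk2
  set K2bar : K0GammaLe n := QuotientAddGroup.mk (FreeAbelianGroup.of k2) with hK2bar
  have hval : ∀ (G : FGraph) (hG : G.edgeCount ≤ n),
      K0Aux.phi0 n (QuotientAddGroup.mk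
        (FreeAbelianGroup.of (⟨G.cls, G, rfl, hG⟩ : GClassLe n))) = (G.edgeCount : ℤ) := by
    intro G hG
    erw [K0Aux.phi0_mk, K0Aux.cntHom_of]
    rfl
  have hK2val : K0Aux.phi0 n K2bar = 1 := by
    rw [hK2bar, hk2, hval fGraphK2 (by rw [fGraphK2_edgeCount]; exact hn),
      fGraphK2_edgeCount, Nat.cast_one]
  have hleft : ∀ x : K0GammaLe n, (K0Aux.phi0 n x) • K2bar = x := by
    intro x
    induction x using QuotientAddGroup.induction_on with
    | _ y =>
      induction y using FreeAbelianGroup.induction_on with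
      | zero => simp
      | of c =>
        obtain ⟨G, hc, hGn⟩ := c.2
        have hc' : c = ⟨G.cls, G, rfl, hGn⟩ := Subtype.ext hc.symm
        rw [hc', hval G hGn, natCast_zsmul]
        exact (K0Aux.genB n hn G hGn).symm
      | neg c hc =>
        have : ((-FreeAbelianGroup.of c : FreeAbelianGroup (GClassLe n)) : K0GammaLe n)
            = -((FreeAbelianGroup.of c : FreeAbelianGroup (GClassLe n)) : K0GammaLe n) := rfl
        rw [this, map_neg, neg_zsmul, hc]
      | add y z hy hz =>
        have : ((y + z : FreeAbelianGroup (GClassLe n)) : K0GammaLe n)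
            = ((y : FreeAbelianGroup (GClassLe n)) : K0GammaLe n) + (z : K0GammaLe n) := rfl
        rw [this, map_add, add_zsmul, hy, hz]
  refine ⟨{ toFun := K0Aux.phi0 n,
            invFun := fun k => k • K2bar,
            left_inv := hleft,
            right_inv := ?_,
            map_add' := map_add (K0Aux.phi0 n) }, ?_, ?_⟩
  · intro k
    simp only [map_zsmul, hK2val, smul_eq_mul, mul_one]
  · intro G hG
    exact hval G hG
  · intro G hG
    exact K0Aux.genB n hn G hG
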